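/- arXiv:0709.0448 — 6 statements merged into one kernel-verified Lean document; each statement's English description precedes it below -/
import Mathlib

section
/- If the Markov chain with kernel S is φ-reducible, then there exists a closed set C with φ(Cᶜ) > 0. Concretely, given A with φ(A) > 0 and y ∈ Aᶜ with S^n(y, A) = 0 for all n, the set C = Aᶜ ∩ Bᶜ is closed and φ(Cᶜ) > 0, where B = ⋃_{m≥1} {w : S^m(w, A) > 0}. -/
open MeasureTheory ProbabilityTheory

/-- Theorem 3 (necessity, constructive form): given a reducibility witness `A`, `y ∈ Aᶜ`,
the set `C = Aᶜ ∩ Bᶜ` with `B = ⋃_{m ≥ 1} {w : Sᵐ(w, A) > 0}` is closed and `φ(Cᶜ) > 0`. -/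
theorem stmt_4 {Y : Type*} [MeasurableSpace Y]
    (S : Kernel Y Y) [IsMarkovKernel S]
    (Sn : ℕ → Kernel Y Y)
    (h1 : Sn 1 = S)
    (hrec : ∀ n, 1 ≤ n → Sn (n + 1) = (Sn n) ∘ₖ S)
    (φ : Measure Y) [SigmaFinite φ] (hφ : φ ≠ 0)
    (A : Set Y) (hA : MeasurableSet A) (hφA : 0 < φ A)
    (y : Y) (hy : y ∈ Aᶜ)
    (h0 : ∀ n, 1 ≤ n → Sn n y A = 0)
    (B C : Set Y)
    (hB : B = ⋃ m : ℕ, ⋃ _ : 1 ≤ m, {w : Y | 0 < Sn m w A})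
    (hCdef : C = Aᶜ ∩ Bᶜ) :
    C.Nonempty ∧ (∀ z ∈ C, S z Cᶜ = 0) ∧ 0 < φ Cᶜ := by
  -- membership in Bᶜ means all n-step probabilities to A vanish
  have hBc : ∀ z ∈ Bᶜ, ∀ m, 1 ≤ m → Sn m z A = 0 := by
    intro z hz m hm
    by_contra h
    exact hz (hB ▸ Set.mem_iUnion.2 ⟨m, Set.mem_iUnion.2 ⟨hm, pos_iff_ne_zero.2 h⟩⟩)
  refine ⟨⟨y, ?_⟩, ?_, ?_⟩
  · -- y ∈ C
    rw [hCdef]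
    refine ⟨hy, ?_⟩
    intro hyB
    rw [hB] at hyB
    obtain ⟨m, hmem⟩ := Set.mem_iUnion.1 hyB
    obtain ⟨hm, hpos⟩ := Set.mem_iUnion.1 hmem
    simp [h0 m hm] at hpos
  · -- closedness
    intro z hz
    rw [hCdef] at hz
    obtain ⟨hzA, hzB⟩ := hz
    have hCc : Cᶜ = A ∪ B := by rw [hCdef]; simp [Set.compl_inter]
    rw [hCc]
    have hSA : S z A = 0 := by
      have := hBc z hzB 1 le_rfl
      rwa [h1] at this
    have hSB : S z B = 0 := by
      rw [hB]
      refine measure_iUnion_null fun m => measure_iUnion_null fun hm => ?_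
      -- Sn (m+1) z A = ∫ Sn m w A dS z = 0
      have hz0 : Sn (m + 1) z A = 0 := hBc z hzB (m + 1) (Nat.le_add_left 1 m)
      rw [hrec m hm, Kernel.comp_apply' _ _ _ hA] at hz0
      have hmeas : Measurable fun w => Sn m w A := (Sn m).measurable_coe hA
      have hae : (fun w => Sn m w A) =ᵐ[S z] 0 :=
        (lintegral_eq_zero_iff hmeas).1 hz0
      have : S z {w | Sn m w A ≠ 0} = 0 := hae
      convert this using 2
      ext w
      simp [pos_iff_ne_zero]
    exact le_antisymm (le_trans (measure_union_le A B) (by rw [hSA, hSB]; simp)) (zero_le)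
  · -- φ Cᶜ > 0
    have : A ⊆ Cᶜ := by
      rw [hCdef]
      intro a ha
      simp [Set.compl_inter, ha]
    exact lt_of_lt_of_le hφA (measure_mono this)
end

section
/- Suppose there exist a non-empty measurable set C ⊆ Θ with ν(Cᶜ) > 0 and a measurable set A ⊆ X such that P(Aᶜ|θ) = 0 for every θ ∈ C and P(A|θ) = 0 for ν-almost every θ ∈ Cᶜ. Then there exists a version of the formal posterior Q̃ such that the kernel R̃(θ, dη) = ∫ Q̃(dη|x) P(dx|θ) satisfies R̃(θ, Cᶜ) = 0 for all θ ∈ C; consequently C is a closed set for R̃ and R̃ is ν-reducible. -/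
open MeasureTheory ProbabilityTheory

/-- `n`-step iterates of a kernel: `iterK S 0 = id`, `iterK S (n+1) = iterK S n ∘ₖ S`,
so that `iterK S n` is the `n`-step transition kernel `Sⁿ` for `n ≥ 1`. -/
noncomputable def iterK {Y : Type*} [MeasurableSpace Y] (S : Kernel Y Y) : ℕ → Kernel Y Y
  | 0 => Kernel.id
  | n + 1 => (iterK S n) ∘ₖ S

lemma iterK_closed {Y : Type*} [MeasurableSpace Y] (S : Kernel Y Y)
    (C : Set Y) (hC : MeasurableSet C) (hclosed : ∀ θ ∈ C, S θ Cᶜ = 0) :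
    ∀ n, ∀ θ ∈ C, iterK S n θ Cᶜ = 0 := by
  intro n
  induction n with
  | zero =>
    intro θ hθ
    simp [iterK, Kernel.id_apply, Measure.dirac_apply' _ hC.compl,
      Set.indicator_of_notMem (Set.notMem_compl_iff.mpr hθ)]
  | succ n ih =>
    intro θ hθ
    rw [iterK, Kernel.comp_apply' _ _ _ hC.compl]
    have h0 : ∀ᵐ η ∂(S θ), iterK S n η Cᶜ = 0 := by
      have : ∀ᵐ η ∂(S θ), η ∈ C := by
        rw [ae_iff]
        exact hclosed θ hθ
      filter_upwards [this] with η hη using ih η hη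
    rw [lintegral_congr_ae h0, lintegral_zero]

/-- Theorem 4 (sufficiency): if sets `A ⊆ X` and `C ⊆ Θ` as described exist, then there is a
version `Q̃` of the formal posterior whose Eaton kernel `R̃ = Q̃ ∘ₖ P` satisfies
`R̃(θ, Cᶜ) = 0` for all `θ ∈ C`; consequently `C` is closed for `R̃` and `R̃` is
`ν`-reducible. -/
theorem stmt_8 {X Θ : Type*} [MeasurableSpace X] [MeasurableSpace Θ]
    (P : Kernel Θ X) [IsMarkovKernel P]
    (ν : Measure Θ) [SigmaFinite ν]
    (M : Measure X) (hM : M = ν.bind (fun θ => P θ)) [SigmaFinite M]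
    (Q : Kernel X Θ) [IsMarkovKernel Q]
    (hQ : ∀ (A : Set X) (B : Set Θ), MeasurableSet A → MeasurableSet B →
      ∫⁻ x in A, Q x B ∂M = ∫⁻ θ in B, P θ A ∂ν)
    (C : Set Θ) (hCmeas : MeasurableSet C) (hCne : C.Nonempty) (hνC : 0 < ν Cᶜ)
    (A : Set X) (hAmeas : MeasurableSet A)
    (hAC : ∀ θ ∈ C, P θ Aᶜ = 0)
    (hACc : ∀ᵐ θ ∂ν, θ ∈ Cᶜ → P θ A = 0) :
    ∃ (Q' : Kernel X Θ), IsMarkovKernel Q' ∧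
      (∀ (A' : Set X) (B : Set Θ), MeasurableSet A' → MeasurableSet B →
        ∫⁻ x in A', Q' x B ∂M = ∫⁻ θ in B, P θ A' ∂ν) ∧
      (∀ θ ∈ C, (Q' ∘ₖ P) θ Cᶜ = 0) ∧
      (∃ (θ : Θ) (B : Set Θ), MeasurableSet B ∧ 0 < ν B ∧
        ∀ n, 1 ≤ n → iterK (Q' ∘ₖ P) n θ B = 0) := by
  classical
  obtain ⟨θ₀, hθ₀⟩ := hCne
  -- the bad set
  set N : Set X := A ∩ {x | Q x Cᶜ ≠ 0} with hNdef
  have hNmeas : MeasurableSet N :=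
    hAmeas.inter ((Q.measurable_coe hCmeas.compl) (measurableSet_singleton 0)).compl
  -- ∫_A Q x Cᶜ dM = 0, hence M N = 0
  have hint : ∫⁻ x in A, Q x Cᶜ ∂M = 0 := by
    rw [hQ A Cᶜ hAmeas hCmeas.compl]
    have h0 : ∀ᵐ θ ∂(ν.restrict Cᶜ), P θ A = 0 := by
      filter_upwards [ae_restrict_of_ae hACc, ae_restrict_mem hCmeas.compl] with θ h1 h2
      exact h1 h2
    rw [lintegral_congr_ae h0, lintegral_zero]
  have hae : ∀ᵐ x ∂(M.restrict A), Q x Cᶜ = 0 :=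
    (lintegral_eq_zero_iff (Q.measurable_coe hCmeas.compl)).mp hint
  have hMN : M N = 0 := by
    have h1 : M.restrict A {x | Q x Cᶜ ≠ 0} = 0 := hae
    rw [Measure.restrict_apply' hAmeas] at h1
    rw [hNdef, Set.inter_comm]
    exact h1
  -- the corrected kernel
  set Q' : Kernel X Θ := Kernel.piecewise hNmeas (Kernel.const X (Measure.dirac θ₀)) Q
    with hQ'def
  have hQ'mem : ∀ x ∈ N, Q' x = Measure.dirac θ₀ := fun x hx => by
    simp [hQ'def, Kernel.piecewise_apply, hx]
  have hQ'nmem : ∀ x ∉ N, Q' x = Q x := fun x hx => by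
    simp [hQ'def, Kernel.piecewise_apply, hx]
  have hdiracC : Measure.dirac θ₀ Cᶜ = 0 := by
    rw [Measure.dirac_apply' _ hCmeas.compl, Set.indicator_of_notMem (Set.notMem_compl_iff.mpr hθ₀)]
  -- Q' x Cᶜ = 0 for all x ∈ A
  have hQ'A : ∀ x ∈ A, Q' x Cᶜ = 0 := by
    intro x hx
    by_cases hxN : x ∈ N
    · rw [hQ'mem x hxN]; exact hdiracC
    · rw [hQ'nmem x hxN]
      by_contra h
      exact hxN ⟨hx, h⟩
  refine ⟨Q', inferInstance, ?_, ?_, ?_⟩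
  · -- Q' is still a version of the posterior
    intro A' B hA' hB
    rw [← hQ A' B hA' hB]
    refine lintegral_congr_ae ?_
    refine ae_restrict_of_ae ?_
    filter_upwards [measure_eq_zero_iff_ae_notMem.mp hMN] with x hx
    rw [hQ'nmem x hx]
  · -- C is closed for Q' ∘ₖ P
    intro θ hθ
    rw [Kernel.comp_apply' _ _ _ hCmeas.compl]
    have h0 : ∀ᵐ x ∂(P θ), Q' x Cᶜ = 0 := by
      have hxA : ∀ᵐ x ∂(P θ), x ∈ A := by
        rw [ae_iff]; exact hAC θ hθ
      filter_upwards [hxA] with x hx using hQ'A x hx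
    rw [lintegral_congr_ae h0, lintegral_zero]
  · -- reducibility witness
    refine ⟨θ₀, Cᶜ, hCmeas.compl, hνC, fun n _ => ?_⟩
    refine iterK_closed (Q' ∘ₖ P) C hCmeas ?_ n θ₀ hθ₀
    intro θ hθ
    rw [Kernel.comp_apply' _ _ _ hCmeas.compl]
    have h0 : ∀ᵐ x ∂(P θ), Q' x Cᶜ = 0 := by
      have hxA : ∀ᵐ x ∂(P θ), x ∈ A := by
        rw [ae_iff]; exact hAC θ hθ
      filter_upwards [hxA] with x hx using hQ'A x hx
    rw [lintegral_congr_ae h0, lintegral_zero]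
end

section
/- Suppose the Eaton kernel R(θ, dη) = ∫ Q(dη|x) P(dx|θ) is ν-reducible, so there is a closed set C with ν(Cᶜ) > 0. Then, setting A = {x : Q(Cᶜ|x) = 0}, we have P(Aᶜ|θ) = 0 for all θ ∈ C and P(A|θ) = 0 for ν-almost all θ ∈ Cᶜ. -/
open MeasureTheory ProbabilityTheory

/-- Theorem 4 (necessity): if Eaton's kernel `R = Q ∘ₖ P` has a closed set `C` with
`ν(Cᶜ) > 0`, then, with `A = {x : Q(Cᶜ|x) = 0}`, we have `P(Aᶜ|θ) = 0` for all `θ ∈ C`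
and `P(A|θ) = 0` for `ν`-a.e. `θ ∈ Cᶜ`. -/
theorem stmt_9 {X Θ : Type*} [MeasurableSpace X] [MeasurableSpace Θ]
    (P : Kernel Θ X) [IsMarkovKernel P]
    (ν : Measure Θ) [SigmaFinite ν]
    (M : Measure X) (hM : M = ν.bind (fun θ => P θ)) [SigmaFinite M]
    (Q : Kernel X Θ) [IsMarkovKernel Q]
    (hQ : ∀ (A : Set X) (B : Set Θ), MeasurableSet A → MeasurableSet B →
      ∫⁻ x in A, Q x B ∂M = ∫⁻ θ in B, P θ A ∂ν)
    (C : Set Θ) (hCmeas : MeasurableSet C) (hCne : C.Nonempty) (hνC : 0 < ν Cᶜ)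
    (hclosed : ∀ θ ∈ C, (Q ∘ₖ P) θ Cᶜ = 0)
    (A : Set X) (hA : A = {x : X | Q x Cᶜ = 0}) :
    (∀ θ ∈ C, P θ Aᶜ = 0) ∧ (∀ᵐ θ ∂ν, θ ∈ Cᶜ → P θ A = 0) := by
  have hQmeas : Measurable fun x => Q x Cᶜ := Q.measurable_coe hCmeas.compl
  have hAmeas : MeasurableSet A := by
    rw [hA]; exact hQmeas (measurableSet_singleton 0)
  constructor
  · intro θ hθ
    have h0 : ∫⁻ x, Q x Cᶜ ∂(P θ) = 0 := by
      rw [← Kernel.comp_apply' _ _ _ hCmeas.compl]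
      exact hclosed θ hθ
    have hae : ∀ᵐ x ∂(P θ), Q x Cᶜ = 0 :=
      (lintegral_eq_zero_iff hQmeas).mp h0
    have : ∀ᵐ x ∂(P θ), x ∈ A := by
      filter_upwards [hae] with x hx
      rw [hA]; exact hx
    exact ae_iff.mp this
  · have h0 : ∫⁻ x in A, Q x Cᶜ ∂M = 0 := by
      have : ∀ x ∈ A, Q x Cᶜ = (0 : ENNReal) := by
        intro x hx; rw [hA] at hx; exact hx
      rw [setLIntegral_congr_fun hAmeas this]
      simp
    have h1 : ∫⁻ θ in Cᶜ, P θ A ∂ν = 0 := by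
      rw [← hQ A Cᶜ hAmeas hCmeas.compl]; exact h0
    have h2 : ∀ᵐ θ ∂(ν.restrict Cᶜ), P θ A = 0 :=
      (lintegral_eq_zero_iff (P.measurable_coe hAmeas)).mp h1
    exact (ae_restrict_iff' hCmeas.compl).mp h2
end

section
/- If there do not exist a non-empty measurable set C ⊆ Θ with ν(Cᶜ) > 0 and a measurable set A ⊆ X with P(Aᶜ|θ) = 0 for all θ ∈ C and P(A|θ) = 0 for ν-almost all θ ∈ Cᶜ, then every version of Eaton's kernel R is ν-irreducible. -/
open MeasureTheory ProbabilityTheory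

/-- Theorem 2: if the sets `A ⊆ X` and `C ⊆ Θ` of Theorem 4 do not exist, then every version
of Eaton's kernel `R = Q ∘ₖ P` is `ν`-irreducible. -/
theorem stmt_11 {X Θ : Type*} [MeasurableSpace X] [MeasurableSpace Θ]
    (P : Kernel Θ X) [IsMarkovKernel P]
    (ν : Measure Θ) [SigmaFinite ν]
    (M : Measure X) (hM : M = ν.bind (fun θ => P θ)) [SigmaFinite M]
    (hno : ¬ ∃ (C : Set Θ) (A : Set X), MeasurableSet C ∧ C.Nonempty ∧ 0 < ν Cᶜ ∧
      MeasurableSet A ∧ (∀ θ ∈ C, P θ Aᶜ = 0) ∧ (∀ᵐ θ ∂ν, θ ∈ Cᶜ → P θ A = 0)) :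
    ∀ (Q : Kernel X Θ), IsMarkovKernel Q →
      (∀ (A : Set X) (B : Set Θ), MeasurableSet A → MeasurableSet B →
        ∫⁻ x in A, Q x B ∂M = ∫⁻ θ in B, P θ A ∂ν) →
      ∀ (Rn : ℕ → Kernel Θ Θ), Rn 1 = Q ∘ₖ P →
        (∀ n, 1 ≤ n → Rn (n + 1) = (Rn n) ∘ₖ (Q ∘ₖ P)) →
        ∀ (θ : Θ) (B : Set Θ), MeasurableSet B → 0 < ν B →
          ∃ n, 1 ≤ n ∧ 0 < Rn n θ B := by
  intro Q hQ hdual Rn hR1 hRn θ B hB hνB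
  by_contra hcon
  push_neg at hcon
  have hcon' : ∀ n, 1 ≤ n → Rn n θ B = 0 := fun n hn =>
    le_antisymm (hcon n hn) (zero_le)
  -- the set C
  set C : Set Θ := {θ' | ∀ n, 1 ≤ n → Rn n θ' B = 0} with hCdef
  have hCmeas : MeasurableSet C := by
    have : C = ⋂ n, ⋂ _ : 1 ≤ n, {θ' | Rn n θ' B = 0} := by
      ext θ'; simp [hCdef, Set.mem_iInter]
    rw [this]
    exact MeasurableSet.iInter fun n => MeasurableSet.iInter fun _ =>
      ((Rn n).measurable_coe hB) (measurableSet_singleton 0)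
  have hθC : θ ∈ C := hcon'
  -- the set A
  set A : Set X := {x | Q x C = 1} with hAdef
  have hAmeas : MeasurableSet A := (Q.measurable_coe hCmeas) (measurableSet_singleton 1)
  -- for θ' ∈ C, (Q ∘ₖ P) θ' Cᶜ = 0
  have hRC : ∀ θ' ∈ C, (Q ∘ₖ P) θ' Cᶜ = 0 := by
    intro θ' hθ'
    have hsub : Cᶜ ⊆ ⋃ n, {y | Rn (n + 1) y B ≠ 0} := by
      intro y hy
      simp only [hCdef, Set.mem_compl_iff, Set.mem_setOf_eq, not_forall] at hy
      obtain ⟨n, hn1, hn0⟩ := hy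
      obtain ⟨m, rfl⟩ := Nat.exists_eq_add_of_le hn1
      exact Set.mem_iUnion.2 ⟨m, by simpa [Nat.add_comm] using hn0⟩
    refine le_antisymm (le_trans (measure_mono hsub) ?_) (zero_le)
    refine le_of_eq (measure_iUnion_null fun n => ?_)
    have h2 : Rn (n + 1 + 1) θ' B = ∫⁻ y, Rn (n + 1) y B ∂((Q ∘ₖ P) θ') := by
      rw [hRn (n + 1) (Nat.le_add_left 1 n), Kernel.comp_apply' _ _ _ hB]
    have h0 : ∫⁻ y, Rn (n + 1) y B ∂((Q ∘ₖ P) θ') = 0 := by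
      rw [← h2]; exact hθ' (n + 1 + 1) (Nat.le_add_left 1 (n + 1))
    have hae := (lintegral_eq_zero_iff ((Rn (n + 1)).measurable_coe hB)).1 h0
    simpa [Filter.EventuallyEq, ae_iff] using hae
  -- for θ' ∈ C, P θ' Aᶜ = 0
  have hPA : ∀ θ' ∈ C, P θ' Aᶜ = 0 := by
    intro θ' hθ'
    have hRC1 : (Q ∘ₖ P) θ' C = 1 := by
      have hc := measure_compl hCmeas (measure_ne_top ((Q ∘ₖ P) θ') C)
      rw [hRC θ' hθ', measure_univ] at hc
      exact le_antisymm prob_le_one (tsub_eq_zero_iff_le.1 hc.symm)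
    have hint : ∫⁻ x, Q x C ∂(P θ') = 1 := by
      rw [← Kernel.comp_apply' Q P θ' hCmeas]; exact hRC1
    have hsub0 : ∫⁻ x, (1 : ENNReal) - Q x C ∂(P θ') = 0 := by
      rw [lintegral_sub (Q.measurable_coe hCmeas) (by rw [hint]; exact ENNReal.one_ne_top)
        (ae_of_all _ fun x => prob_le_one), hint, lintegral_one, measure_univ, tsub_self]
    have hae := (lintegral_eq_zero_iff
      (measurable_const.sub (Q.measurable_coe hCmeas))).1 hsub0
    have : ∀ᵐ x ∂(P θ'), x ∈ A := by
      filter_upwards [hae] with x hx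
      have h1 : (1 : ENNReal) ≤ Q x C := tsub_eq_zero_iff_le.1 hx
      exact le_antisymm prob_le_one h1
    simpa [ae_iff, hAdef, Set.compl_setOf] using this
  -- ν Cᶜ > 0
  have hνC : 0 < ν Cᶜ := by
    rw [pos_iff_ne_zero]
    intro h0
    have hνB' : ν B = ∫⁻ θ', (Q ∘ₖ P) θ' B ∂ν := by
      have h1 := hdual Set.univ B MeasurableSet.univ hB
      rw [Measure.restrict_univ] at h1
      have h2 : ∫⁻ θ' in B, P θ' Set.univ ∂ν = ν B := by
        simp [measure_univ]
      have h3 : ∫⁻ x, Q x B ∂M = ∫⁻ θ', ∫⁻ x, Q x B ∂(P θ') ∂ν := by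
        rw [hM, Measure.lintegral_bind P.measurable.aemeasurable (Q.measurable_coe hB).aemeasurable]
      rw [← h2, ← h1, h3]
      exact lintegral_congr fun θ' => (Kernel.comp_apply' Q P θ' hB).symm
    have hzero : ∫⁻ θ', (Q ∘ₖ P) θ' B ∂ν = 0 := by
      have haeC : ∀ᵐ θ' ∂ν, θ' ∈ C := by
        rw [ae_iff]; simpa [Set.compl_def] using h0
      rw [lintegral_eq_zero_iff ((Q ∘ₖ P).measurable_coe hB)]
      filter_upwards [haeC] with θ' hθ'
      have := hθ' 1 le_rfl
      rwa [hR1] at this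
    exact hνB.ne' (by rw [hνB', hzero])
  -- a.e. θ ∈ Cᶜ, P θ A = 0
  have haeA : ∀ᵐ θ' ∂ν, θ' ∈ Cᶜ → P θ' A = 0 := by
    have h1 := hdual A Cᶜ hAmeas hCmeas.compl
    have hzero : ∫⁻ x in A, Q x Cᶜ ∂M = 0 := by
      rw [setLIntegral_congr_fun hAmeas (fun x (hx : x ∈ A) => ?_),
        lintegral_zero]
      have hc := measure_compl hCmeas (measure_ne_top (Q x) C)
      rw [hx, measure_univ, tsub_self] at hc
      exact hc
    rw [hzero] at h1
    exact (setLIntegral_eq_zero_iff hCmeas.compl (P.measurable_coe hAmeas)).1 h1.symm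
  exact hno ⟨C, A, hCmeas, ⟨θ, hθC⟩, hνC, hAmeas, hPA, haeA⟩
end

section
/- Let C ⊆ ℝ be a non-empty measurable set whose complement has positive Lebesgue measure. Then there exist θ' ∈ C and a measurable set D ⊆ Cᶜ with positive Lebesgue measure such that |θ − θ'| < 1/4 for every θ ∈ D. -/
open MeasureTheory

/-- Example 1, key step: for any non-empty measurable `C ⊆ ℝ` with `Leb(Cᶜ) > 0`, there exist
`θ' ∈ C` and a measurable `D ⊆ Cᶜ` of positive Lebesgue measure with `|θ − θ'| < 1/4` for
all `θ ∈ D`. -/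
theorem stmt_13 (C : Set ℝ) (hC : MeasurableSet C) (hne : C.Nonempty)
    (hpos : 0 < volume Cᶜ) :
    ∃ θ' ∈ C, ∃ D : Set ℝ, MeasurableSet D ∧ D ⊆ Cᶜ ∧ 0 < volume D ∧
      ∀ θ ∈ D, |θ - θ'| < 1 / 4 := by
  by_contra h
  push_neg at h
  -- Every point of `C` has a null `Cᶜ`-neighborhood of radius 1/4.
  have key : ∀ θ' ∈ C, volume (Cᶜ ∩ Metric.ball θ' (1/4)) = 0 := by
    intro θ' hθ'
    by_contra hv
    obtain ⟨θ, hθmem, hθfar⟩ :=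
      h θ' hθ' (Cᶜ ∩ Metric.ball θ' (1/4))
        ((hC.compl).inter measurableSet_ball) Set.inter_subset_left
        (pos_iff_ne_zero.mpr hv)
    have : dist θ θ' < 1/4 := Metric.mem_ball.mp hθmem.2
    rw [Real.dist_eq] at this
    have : ¬ (1/4 : ℝ) ≤ |θ - θ'| := not_le.mpr this
    exact this (by simpa using hθfar)
  -- picking lemma: any interval a.e. inside `C`'s null-complement ball contains a point of `C`
  have pick : ∀ θ' ∈ C, ∀ a b : ℝ, a < b → Set.Ioo a b ⊆ Metric.ball θ' (1/4) →
      ∃ θ'' ∈ C, θ'' ∈ Set.Ioo a b := by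
    intro θ' hθ' a b hab hsub
    by_contra hco
    push_neg at hco
    have hsub2 : Set.Ioo a b ⊆ Cᶜ ∩ Metric.ball θ' (1/4) :=
      fun y hy => ⟨fun hyC => hco y hyC hy, hsub hy⟩
    have h0 : volume (Set.Ioo a b) = 0 :=
      le_antisymm (le_trans (measure_mono hsub2) (key θ' hθ').le) zero_le
    rw [Real.volume_Ioo] at h0
    have := ENNReal.ofReal_eq_zero.mp h0
    linarith
  -- The union of balls around points of `C`
  set V : Set ℝ := ⋃ i : C, Metric.ball (i : ℝ) (1/4) with hV
  have hVopen : IsOpen V := isOpen_iUnion fun _ => Metric.isOpen_ball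
  obtain ⟨θ₀, hθ₀⟩ := hne
  have hVne : V.Nonempty :=
    ⟨θ₀, Set.mem_iUnion.mpr ⟨⟨θ₀, hθ₀⟩, Metric.mem_ball_self (by norm_num)⟩⟩
  -- `V` is closed
  have hVclosed : IsClosed V := by
    rw [← closure_subset_iff_isClosed]
    intro x hx
    obtain ⟨u, huV, hux⟩ := Metric.mem_closure_iff.mp hx (1/16) (by norm_num)
    obtain ⟨⟨θ', hθ'⟩, hu⟩ := Set.mem_iUnion.mp huV
    have hd : |x - θ'| < 5/16 := by
      have h1 : dist x θ' ≤ dist x u + dist u θ' := dist_triangle x u θ'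
      have h2 : dist u θ' < 1/4 := Metric.mem_ball.mp hu
      simp only [Real.dist_eq] at h1 h2
      rw [Real.dist_eq] at hux
      linarith
    obtain ⟨hd1, hd2⟩ := abs_lt.mp hd
    rcases le_or_gt θ' x with hle | hlt
    · obtain ⟨θ'', hθ''C, hI1, hI2⟩ := pick θ' hθ' (θ' + 1/8) (θ' + 1/4) (by linarith)
        (by
          intro y hy
          rw [Metric.mem_ball, Real.dist_eq, abs_lt]
          obtain ⟨hy1, hy2⟩ := hy
          constructor <;> linarith)
      refine Set.mem_iUnion.mpr ⟨⟨θ'', hθ''C⟩, ?_⟩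
      rw [Metric.mem_ball, Real.dist_eq, abs_lt]
      constructor <;> linarith
    · obtain ⟨θ'', hθ''C, hI1, hI2⟩ := pick θ' hθ' (θ' - 1/4) (θ' - 1/8) (by linarith)
        (by
          intro y hy
          rw [Metric.mem_ball, Real.dist_eq, abs_lt]
          obtain ⟨hy1, hy2⟩ := hy
          constructor <;> linarith)
      refine Set.mem_iUnion.mpr ⟨⟨θ'', hθ''C⟩, ?_⟩
      rw [Metric.mem_ball, Real.dist_eq, abs_lt]
      constructor <;> linarith
  have hVuniv : V = Set.univ := (IsClopen.eq_univ ⟨hVclosed, hVopen⟩) hVne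
  -- countable subcover and nullity of `Cᶜ`
  obtain ⟨T, hTc, hTeq⟩ := TopologicalSpace.isOpen_iUnion_countable
    (fun i : C => Metric.ball (i : ℝ) (1/4)) (fun _ => Metric.isOpen_ball)
  have hnull : volume (⋃ i ∈ T, Cᶜ ∩ Metric.ball (i : ℝ) (1/4)) = 0 :=
    (measure_biUnion_null_iff hTc).mpr fun i _ => key i i.2
  have hsubset : Cᶜ ⊆ ⋃ i ∈ T, Cᶜ ∩ Metric.ball (i : ℝ) (1/4) := by
    intro x hx
    have hxV : x ∈ V := hVuniv ▸ Set.mem_univ x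
    rw [hV, ← hTeq] at hxV
    obtain ⟨i, hiT, hib⟩ := Set.mem_iUnion₂.mp hxV
    exact Set.mem_iUnion₂.mpr ⟨i, hiT, hx, hib⟩
  have : volume Cᶜ = 0 := le_antisymm (le_trans (measure_mono hsubset) hnull.le) zero_le
  exact absurd this (pos_iff_ne_zero.mp hpos)
end

section
/- Consider the uniform location model on ℝ: P(A|θ) = Leb(A ∩ (θ, θ+1)), with prior ν = Lebesgue measure on ℝ. Then there do not exist a non-empty measurable set C ⊆ ℝ with ν(Cᶜ) > 0 and a measurable set A ⊆ ℝ such that P(Aᶜ|θ) = 0 for all θ ∈ C and P(A|θ) = 0 for ν-almost all θ ∈ Cᶜ. -/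
open MeasureTheory ENNReal

/-- Example 1: for the uniform location model `P(A|θ) = Leb(A ∩ (θ, θ+1))` with prior
`ν = Leb`, the sets `A` and `C` of Theorem 4 do not exist (hence every version of Eaton's
chain is `ν`-irreducible). -/
theorem stmt_14 :
    ¬ ∃ (C A : Set ℝ), MeasurableSet C ∧ C.Nonempty ∧ 0 < volume Cᶜ ∧
      MeasurableSet A ∧
      (∀ θ ∈ C, volume (Aᶜ ∩ Set.Ioo θ (θ + 1)) = 0) ∧
      (∀ᵐ θ ∂(volume : Measure ℝ), θ ∈ Cᶜ → volume (A ∩ Set.Ioo θ (θ + 1)) = 0) := by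
  rintro ⟨C, A, hC, ⟨θ₀, hθ₀⟩, hCc, hA, h1, h2⟩
  set f : ℝ → ℝ≥0∞ := fun θ => volume (A ∩ Set.Ioo θ (θ + 1)) with hf
  have hIoo : ∀ θ : ℝ, volume (Set.Ioo θ (θ + 1)) = 1 := by
    intro θ; rw [Real.volume_Ioo]; simp
  have hle1 : ∀ θ : ℝ, f θ ≤ 1 := by
    intro θ
    calc f θ ≤ volume (Set.Ioo θ (θ + 1)) := measure_mono Set.inter_subset_right
      _ = 1 := hIoo θ
  have hfC : ∀ θ ∈ C, f θ = 1 := by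
    intro θ hθ
    refine le_antisymm (hle1 θ) ?_
    have hcover : Set.Ioo θ (θ + 1) ⊆ (A ∩ Set.Ioo θ (θ + 1)) ∪ (Aᶜ ∩ Set.Ioo θ (θ + 1)) := by
      intro x hx
      by_cases hxA : x ∈ A
      · exact Or.inl ⟨hxA, hx⟩
      · exact Or.inr ⟨hxA, hx⟩
    calc (1 : ℝ≥0∞) = volume (Set.Ioo θ (θ + 1)) := (hIoo θ).symm
      _ ≤ volume ((A ∩ Set.Ioo θ (θ + 1)) ∪ (Aᶜ ∩ Set.Ioo θ (θ + 1))) := measure_mono hcover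
      _ ≤ f θ + volume (Aᶜ ∩ Set.Ioo θ (θ + 1)) := measure_union_le _ _
      _ = f θ := by rw [h1 θ hθ, add_zero]
  -- key Lipschitz inequality
  have key : ∀ θ θ' : ℝ,
      f θ ≤ f θ' + (ENNReal.ofReal (θ' - θ) + ENNReal.ofReal (θ - θ')) := by
    intro θ θ'
    have hsub : A ∩ Set.Ioo θ (θ + 1) ⊆
        ((A ∩ Set.Ioo θ' (θ' + 1)) ∪ Set.Ioc θ θ') ∪ Set.Ico (θ' + 1) (θ + 1) := by
      rintro x ⟨hxA, hx1, hx2⟩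
      by_cases ha : x ≤ θ'
      · exact Or.inl (Or.inr ⟨hx1, ha⟩)
      by_cases hb : θ' + 1 ≤ x
      · exact Or.inr ⟨hb, hx2⟩
      · exact Or.inl (Or.inl ⟨hxA, lt_of_not_ge ha, lt_of_not_ge hb⟩)
    calc f θ ≤ volume ((A ∩ Set.Ioo θ' (θ' + 1)) ∪ Set.Ioc θ θ') +
          volume (Set.Ico (θ' + 1) (θ + 1)) :=
        le_trans (measure_mono hsub) (measure_union_le _ _)
      _ ≤ (f θ' + volume (Set.Ioc θ θ')) + volume (Set.Ico (θ' + 1) (θ + 1)) := by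
          gcongr; exact measure_union_le _ _
      _ = f θ' + (ENNReal.ofReal (θ' - θ) + ENNReal.ofReal (θ - θ')) := by
          rw [Real.volume_Ioc, Real.volume_Ico, add_assoc]
          congr 2
          ring_nf
  have hfin : ∀ θ : ℝ, f θ ≠ ⊤ := fun θ => ne_top_of_le_ne_top ENNReal.one_ne_top (hle1 θ)
  set g : ℝ → ℝ := fun θ => (f θ).toReal with hg
  have hgle : ∀ θ θ' : ℝ, g θ ≤ g θ' + |θ - θ'| := by
    intro θ θ'
    have h := key θ θ'
    have htr : g θ ≤ g θ' + (max (θ' - θ) 0 + max (θ - θ') 0) := by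
      have htop : f θ' + (ENNReal.ofReal (θ' - θ) + ENNReal.ofReal (θ - θ')) ≠ ⊤ :=
        ENNReal.add_ne_top.2 ⟨hfin θ',
          ENNReal.add_ne_top.2 ⟨ENNReal.ofReal_ne_top, ENNReal.ofReal_ne_top⟩⟩
      have := ENNReal.toReal_mono htop h
      rwa [ENNReal.toReal_add (hfin θ')
          (ENNReal.add_ne_top.2 ⟨ENNReal.ofReal_ne_top, ENNReal.ofReal_ne_top⟩),
        ENNReal.toReal_add ENNReal.ofReal_ne_top ENNReal.ofReal_ne_top,
        ENNReal.toReal_ofReal', ENNReal.toReal_ofReal'] at this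
    have hmax : max (θ' - θ) 0 + max (θ - θ') 0 ≤ |θ - θ'| := by
      rcases le_total θ θ' with hle | hle
      · rw [max_eq_left (by linarith), max_eq_right (by linarith), abs_of_nonpos (by linarith)]
        linarith
      · rw [max_eq_right (by linarith), max_eq_left (by linarith), abs_of_nonneg (by linarith)]
        linarith
    linarith
  have hlip : LipschitzWith 1 g := by
    apply LipschitzWith.of_dist_le_mul
    intro θ θ'
    rw [Real.dist_eq, Real.dist_eq, NNReal.coe_one, one_mul]
    rw [abs_sub_le_iff]
    constructor
    · have := hgle θ θ'; linarith
    · have := hgle θ' θ; rw [abs_sub_comm] at this; linarith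
  have hcont : Continuous g := hlip.continuous
  -- find θ₁ with f θ₁ = 0
  set E : Set ℝ := {θ | θ ∈ Cᶜ ∧ f θ ≠ 0} with hE
  have hEnull : volume E = 0 := by
    have := ae_iff.mp h2
    convert this using 2
    ext θ
    simp [hE]; intro _; rfl
  obtain ⟨θ₁, hθ₁Cc, hθ₁E⟩ : ∃ θ₁, θ₁ ∈ Cᶜ ∧ θ₁ ∉ E := by
    by_contra hcon
    push_neg at hcon
    have : Cᶜ ⊆ E := fun θ hθ => hcon θ hθ
    exact absurd (measure_mono_null this hEnull) (by exact hCc.ne')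
  have hfθ₁ : f θ₁ = 0 := by
    by_contra h
    exact hθ₁E ⟨hθ₁Cc, h⟩
  have hgθ₀ : g θ₀ = 1 := by simp [hg, hfC θ₀ hθ₀]
  have hgθ₁ : g θ₁ = 0 := by simp [hg, hfθ₁]
  -- IVT: get c with g c = 1/2
  have hsub : Set.uIcc (g θ₁) (g θ₀) ⊆ g '' Set.uIcc θ₁ θ₀ :=
    intermediate_value_uIcc hcont.continuousOn
  have hmem : (1/2 : ℝ) ∈ Set.uIcc (g θ₁) (g θ₀) := by
    rw [hgθ₀, hgθ₁]
    rw [Set.uIcc_of_le (by norm_num)]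
    constructor <;> norm_num
  obtain ⟨c, _, hc⟩ := hsub hmem
  -- the open set U
  set U : Set ℝ := g ⁻¹' Set.Ioo (1/4 : ℝ) (3/4 : ℝ) with hU
  have hUopen : IsOpen U := isOpen_Ioo.preimage hcont
  have hUne : U.Nonempty := ⟨c, by rw [Set.mem_preimage, hc]; constructor <;> norm_num⟩
  have hUpos : 0 < volume U := hUopen.measure_pos volume hUne
  have hUE : U ⊆ E := by
    intro θ hθ
    have hθ' : g θ ∈ Set.Ioo (1/4 : ℝ) (3/4 : ℝ) := hθ
    constructor
    · intro hθC
      have : g θ = 1 := by simp [hg, hfC θ hθC]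
      rw [this] at hθ'
      exact absurd hθ'.2 (by norm_num)
    · intro h0
      have : g θ = 0 := by simp [hg, h0]
      rw [this] at hθ'
      exact absurd hθ'.1 (by norm_num)
  exact absurd (measure_mono_null hUE hEnull) hUpos.ne'
end
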